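/- For all n ≥ 0, if π is a Jacobi permutation of [n] that avoids the pattern 213, then the inverse permutation π⁻¹ is also Jacobi. -/

import Mathlib

/-- The length of `ρ_π(π_k)`: the maximal consecutive subword of `π` immediately to the
right of position `k`, all of whose letters are larger than `π_k`.  Letters of a
permutation of `[n] = {1,…,n}` are modelled by `(π i : ℕ) + 1` for `π : Equiv.Perm (Fin n)`. -/
noncomputable def rhoLen {n : ℕ} (π : Equiv.Perm (Fin n)) (k : Fin n) : ℕ :=
  Nat.card {j : Fin n // k < j ∧ ∀ i : Fin n, k < i → i ≤ j → π k < π i}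

/-- A permutation is Jacobi if `ρ_π(π_k)` has even length for every position `k`. -/
def IsJacobi {n : ℕ} (π : Equiv.Perm (Fin n)) : Prop :=
  ∀ k : Fin n, Even (rhoLen π k)

/-- `π` avoids the pattern `123`. -/
def Avoids123 {n : ℕ} (π : Equiv.Perm (Fin n)) : Prop :=
  ¬ ∃ i j k : Fin n, i < j ∧ j < k ∧ π i < π j ∧ π j < π k

/-- `π` avoids the pattern `132`. -/
def Avoids132 {n : ℕ} (π : Equiv.Perm (Fin n)) : Prop :=
  ¬ ∃ i j k : Fin n, i < j ∧ j < k ∧ π i < π k ∧ π k < π j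

/-- `π` avoids the pattern `213`. -/
def Avoids213 {n : ℕ} (π : Equiv.Perm (Fin n)) : Prop :=
  ¬ ∃ i j k : Fin n, i < j ∧ j < k ∧ π j < π i ∧ π i < π k

/-- `π` avoids the pattern `231`. -/
def Avoids231 {n : ℕ} (π : Equiv.Perm (Fin n)) : Prop :=
  ¬ ∃ i j k : Fin n, i < j ∧ j < k ∧ π k < π i ∧ π i < π j

/-- `π` avoids the pattern `312`. -/
def Avoids312 {n : ℕ} (π : Equiv.Perm (Fin n)) : Prop :=
  ¬ ∃ i j k : Fin n, i < j ∧ j < k ∧ π j < π k ∧ π k < π i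

/-- `π` avoids the pattern `321`. -/
def Avoids321 {n : ℕ} (π : Equiv.Perm (Fin n)) : Prop :=
  ¬ ∃ i j k : Fin n, i < j ∧ j < k ∧ π k < π j ∧ π j < π i


theorem Equiv.Perm.inv_apply_self {α : Type*} (f : Equiv.Perm α) (x : α) : f⁻¹ (f x) = x :=
  Equiv.symm_apply_apply f x

theorem Equiv.Perm.apply_inv_self {α : Type*} (f : Equiv.Perm α) (x : α) : f (f⁻¹ x) = x :=
  Equiv.apply_symm_apply f x

def runSet {n : ℕ} (π : Equiv.Perm (Fin n)) (k : Fin n) : Finset (Fin n) :=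
  Finset.univ.filter (fun j => k < j ∧ ∀ i : Fin n, k < i → i ≤ j → π k < π i)

lemma rhoLen_eq_card {n : ℕ} (π : Equiv.Perm (Fin n)) (k : Fin n) :
    rhoLen π k = (runSet π k).card := by
  rw [rhoLen, Nat.card_eq_fintype_card, runSet]
  exact Fintype.card_subtype _

lemma nat_interval (F : Finset ℕ) (k : ℕ)
    (h1 : ∀ x ∈ F, k < x)
    (h2 : ∀ x ∈ F, ∀ y, k < y → y ≤ x → y ∈ F) :
    F = Finset.Ioc k (k + F.card) := by
  rcases F.eq_empty_or_nonempty with h | h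
  · simp [h]
  · have hM := F.max'_mem h
    have hFI : F = Finset.Ioc k (F.max' h) := by
      apply Finset.Subset.antisymm
      · intro x hx
        exact Finset.mem_Ioc.2 ⟨h1 x hx, Finset.le_max' F x hx⟩
      · intro y hy
        rw [Finset.mem_Ioc] at hy
        exact h2 _ hM y hy.1 hy.2
    have hkM : k < F.max' h := h1 _ hM
    rw [hFI, Nat.card_Ioc]
    congr 1
    omega

lemma run_image {n : ℕ} (π : Equiv.Perm (Fin n)) (k : Fin n) :
    (runSet π k).image Fin.val = Finset.Ioc (k : ℕ) ((k : ℕ) + rhoLen π k) := by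
  have hc : ((runSet π k).image Fin.val).card = (runSet π k).card :=
    Finset.card_image_of_injective _ Fin.val_injective
  rw [rhoLen_eq_card, ← hc]
  apply nat_interval
  · intro x hx
    obtain ⟨j, hj, rfl⟩ := Finset.mem_image.1 hx
    rw [runSet, Finset.mem_filter] at hj
    exact hj.2.1
  · intro x hx y hky hyx
    obtain ⟨j, hj, rfl⟩ := Finset.mem_image.1 hx
    rw [runSet, Finset.mem_filter] at hj
    have hyn : y < n := lt_of_le_of_lt hyx j.isLt
    refine Finset.mem_image.2 ⟨⟨y, hyn⟩, ?_, rfl⟩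
    rw [runSet, Finset.mem_filter]
    refine ⟨Finset.mem_univ _, hky, fun i hki hiy => hj.2.2 i hki (le_trans hiy ?_)⟩
    exact hyx

lemma mem_runSet_iff {n : ℕ} (π : Equiv.Perm (Fin n)) (k : Fin n) (j : Fin n) :
    j ∈ runSet π k ↔ (k : ℕ) < (j : ℕ) ∧ (j : ℕ) ≤ (k : ℕ) + rhoLen π k := by
  constructor
  · intro hj
    have : (j : ℕ) ∈ (runSet π k).image Fin.val := Finset.mem_image_of_mem _ hj
    rw [run_image, Finset.mem_Ioc] at this
    exact this
  · intro hj
    have : (j : ℕ) ∈ (runSet π k).image Fin.val := by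
      rw [run_image, Finset.mem_Ioc]; exact hj
    obtain ⟨j', hj', he⟩ := Finset.mem_image.1 this
    rwa [Fin.val_injective he] at hj'

lemma run_bound {n : ℕ} (π : Equiv.Perm (Fin n)) (k : Fin n) :
    (k : ℕ) + rhoLen π k < n := by
  rcases Nat.eq_zero_or_pos (rhoLen π k) with h | h
  · simpa [h] using k.isLt
  · have : (k : ℕ) + rhoLen π k ∈ (runSet π k).image Fin.val := by
      rw [run_image, Finset.mem_Ioc]; omega
    obtain ⟨j, _, he⟩ := Finset.mem_image.1 this
    rw [← he]; exact j.isLt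

-- Fact 1
lemma run_val_gt {n : ℕ} (π : Equiv.Perm (Fin n)) (k : Fin n) (j : Fin n)
    (h1 : (k : ℕ) < (j : ℕ)) (h2 : (j : ℕ) ≤ (k : ℕ) + rhoLen π k) : π k < π j := by
  have hj : j ∈ runSet π k := (mem_runSet_iff π k j).2 ⟨h1, h2⟩
  rw [runSet, Finset.mem_filter] at hj
  exact hj.2.2 j hj.2.1 le_rfl

-- Fact 2
lemma run_stop_lt {n : ℕ} (π : Equiv.Perm (Fin n)) (k : Fin n) (j : Fin n)
    (hj : (j : ℕ) = (k : ℕ) + rhoLen π k + 1) : π j < π k := by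
  have hnot : j ∉ runSet π k := by
    rw [mem_runSet_iff]; omega
  rw [runSet, Finset.mem_filter] at hnot
  push_neg at hnot
  have hkj : k < j := by rw [Fin.lt_def]; omega
  obtain ⟨i, hki, hij, hle⟩ := hnot (Finset.mem_univ _) hkj
  have hik : i ≠ k := ne_of_gt hki
  have hlt : π i < π k := lt_of_le_of_ne hle (fun he => hik (π.injective he))
  have : i = j := by
    rcases lt_or_eq_of_le hij with h | h
    · exfalso
      have := run_val_gt π k i (Fin.lt_def.1 hki) (by rw [Fin.lt_def] at h; omega)
      exact absurd this (not_lt.2 hle)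
    · exact h
  rwa [← this]


lemma card_le_of_val_subset {n : ℕ} (S : Finset (Fin n)) (T : Finset ℕ)
    (h : ∀ x ∈ S, (x : ℕ) ∈ T) : S.card ≤ T.card := by
  rw [← Finset.card_image_of_injective S Fin.val_injective]
  exact Finset.card_le_card (fun y hy => by
    obtain ⟨x, hx, rfl⟩ := Finset.mem_image.1 hy; exact h x hx)

lemma rho_inv_eq {n : ℕ} (π : Equiv.Perm (Fin n)) (hav : Avoids213 π) (k : Fin n) :
    rhoLen π⁻¹ (π k) = rhoLen π k := by
  set m := rhoLen π k with hm
  set m' := rhoLen π⁻¹ (π k) with hm'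
  have hBcard : ((runSet π k).image π).card = m := by
    rw [Finset.card_image_of_injective _ π.injective, hm, rhoLen_eq_card]
  have hCcard : ((runSet π⁻¹ (π k)).image ⇑π⁻¹).card = m' := by
    rw [Finset.card_image_of_injective _ π⁻¹.injective, hm', rhoLen_eq_card]
  have hC : ∀ p ∈ (runSet π⁻¹ (π k)).image ⇑π⁻¹, k < p ∧ π k < π p := by
    intro p hp
    obtain ⟨u, hu, rfl⟩ := Finset.mem_image.1 hp
    rw [runSet, Finset.mem_filter] at hu
    have h1 := hu.2.2 u hu.2.1 le_rfl
    rw [Equiv.Perm.inv_apply_self] at h1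
    refine ⟨h1, ?_⟩
    rw [Equiv.Perm.apply_inv_self]
    exact hu.2.1
  have hle1 : m ≤ m' := by
    rcases Nat.eq_zero_or_pos m with h0 | hpos
    · omega
    · have hvm : (π k : ℕ) + m < n := by
        have hcard : m ≤ (Finset.Ioo ((π k : ℕ)) n).card := by
          rw [← hBcard]
          apply card_le_of_val_subset
          intro b hb
          obtain ⟨j, hj, rfl⟩ := Finset.mem_image.1 hb
          have hj' := (mem_runSet_iff π k j).1 hj
          have hgt := run_val_gt π k j hj'.1 hj'.2
          rw [Finset.mem_Ioo]
          exact ⟨Fin.lt_def.1 hgt, (π j).isLt⟩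
        rw [Nat.card_Ioo] at hcard
        have := (π k).isLt
        omega
      set w : Fin n := ⟨(π k : ℕ) + m, hvm⟩ with hw
      have hwmem : w ∈ runSet π⁻¹ (π k) := by
        rw [runSet, Finset.mem_filter]
        refine ⟨Finset.mem_univ _, by rw [Fin.lt_def]; simp only [hw]; omega, ?_⟩
        intro u hku huw
        rw [Equiv.Perm.inv_apply_self]
        by_contra hcon
        push_neg at hcon
        have hpu : π (π⁻¹ u) = u := Equiv.Perm.apply_inv_self π u
        have hpk : π⁻¹ u ≠ k := by
          intro he
          rw [he] at hpu
          exact ne_of_lt hku hpu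
        have hpltk : π⁻¹ u < k := lt_of_le_of_ne hcon hpk
        have hq : ∃ q ∈ runSet π k, u < π q := by
          by_contra hq
          push_neg at hq
          have hcard : m ≤ (Finset.Ioo ((π k : ℕ)) ((u : ℕ))).card := by
            rw [← hBcard]
            apply card_le_of_val_subset
            intro b hb
            obtain ⟨j, hj, rfl⟩ := Finset.mem_image.1 hb
            have h1 := (mem_runSet_iff π k j).1 hj
            have h2 := run_val_gt π k j h1.1 h1.2
            have h3 : π j ≤ u := hq j hj
            have h4 : π j ≠ u := by
              intro he
              have hjp : j = π⁻¹ u := by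
                apply π.injective
                rw [hpu, he]
              rw [hjp] at h1
              have := Fin.lt_def.1 hpltk
              omega
            rw [Finset.mem_Ioo]
            exact ⟨Fin.lt_def.1 h2,
              lt_of_le_of_ne (Fin.le_def.1 h3) (fun hv => h4 (Fin.val_injective hv))⟩
          rw [Nat.card_Ioo] at hcard
          have h5 := Fin.le_def.1 huw
          have h6 := Fin.lt_def.1 hku
          simp only [hw] at h5
          omega
        obtain ⟨q, hqmem, hqu⟩ := hq
        have hkq : k < q := by
          rw [Fin.lt_def]
          exact ((mem_runSet_iff π k q).1 hqmem).1
        refine hav ⟨π⁻¹ u, k, q, hpltk, hkq, ?_, ?_⟩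
        · rw [hpu]; exact hku
        · rw [hpu]; exact hqu
      have hle := ((mem_runSet_iff π⁻¹ (π k) w).1 hwmem).2
      simp only [hw] at hle
      omega
  have hle2 : m' ≤ m := by
    by_contra hcon
    push_neg at hcon
    have hb' := run_bound π⁻¹ (π k)
    rw [← hm'] at hb'
    by_cases hcase : (k : ℕ) + m + 1 < n
    · set j : Fin n := ⟨(k : ℕ) + m + 1, hcase⟩ with hj
      have hjlt : π j < π k := run_stop_lt π k j rfl
      by_cases hex : ∃ p ∈ (runSet π⁻¹ (π k)).image ⇑π⁻¹, j < p
      · obtain ⟨p, hp, hjp⟩ := hex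
        have h1 := hC p hp
        refine hav ⟨k, j, p, ?_, hjp, hjlt, h1.2⟩
        rw [Fin.lt_def]
        simp only [hj]
        omega
      · push_neg at hex
        have hcard : m' ≤ (Finset.Ioo ((k : ℕ)) ((k : ℕ) + m + 1)).card := by
          rw [← hCcard]
          apply card_le_of_val_subset
          intro p hp
          have h1 := hC p hp
          have h2 := hex p hp
          have h3 : p ≠ j := by
            intro he
            rw [he] at h1
            exact absurd h1.2 (not_lt.2 (le_of_lt hjlt))
          have h4 : (p : ℕ) < (k : ℕ) + m + 1 := by
            have := Fin.le_def.1 h2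
            simp only [hj] at this
            rcases lt_or_eq_of_le this with h | h
            · exact h
            · exact absurd (Fin.val_injective (by simpa [hj] using h)) h3
          rw [Finset.mem_Ioo]
          exact ⟨Fin.lt_def.1 h1.1, h4⟩
        rw [Nat.card_Ioo] at hcard
        omega
    · have hcard : m' ≤ (Finset.Ioo ((k : ℕ)) n).card := by
        rw [← hCcard]
        apply card_le_of_val_subset
        intro p hp
        have h1 := hC p hp
        rw [Finset.mem_Ioo]
        exact ⟨Fin.lt_def.1 h1.1, p.isLt⟩
      rw [Nat.card_Ioo] at hcard
      omega
  omega

/-- If `π` is a 213-avoiding Jacobi permutation of `[n]`, then `π⁻¹` is Jacobi. -/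
theorem jacobi_avoid_213_inv_jacobi (n : ℕ) (π : Equiv.Perm (Fin n))
    (hJ : IsJacobi π) (hav : Avoids213 π) : IsJacobi π⁻¹ := by
  intro v
  have h := rho_inv_eq π hav (π⁻¹ v)
  rw [Equiv.Perm.apply_inv_self] at h
  rw [h]
  exact hJ _
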